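/- A cost array q : {1,...,m}² × {1,...,n}² → ℝ is linearizable (i.e., there exist a : {1,...,m}² → ℝ and b : {1,...,n}² → ℝ with Σ_{i,k} q(i,σ(i),k,π(k)) = Σ_i a(i,σ(i)) + Σ_k b(k,π(k)) for all permutations σ of {1,...,m} and π of {1,...,n}) if and only if there exist arrays e, f : {1,...,m}² × {1,...,n} → ℝ and g, h : {1,...,m} × {1,...,n}² → ℝ such that q(i,j,k,ℓ) = e(i,j,k) + f(i,j,ℓ) + g(i,k,ℓ) + h(j,k,ℓ) for all i,j,k,ℓ. -/

import Mathlib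

-- sum difference under a swap-twisted permutation
lemma stmt8_swap_sum {α : Type*} [Fintype α] [DecidableEq α]
    (c : α → α → ℝ) (σ : Equiv.Perm α) (i1 i2 : α) (h : i1 ≠ i2) :
    ∑ i, c i ((σ * Equiv.swap i1 i2) i) - ∑ i, c i (σ i)
      = c i1 (σ i2) + c i2 (σ i1) - c i1 (σ i1) - c i2 (σ i2) := by
  have reindex : ∑ i, c i (σ (Equiv.swap i1 i2 i)) = ∑ i, c (Equiv.swap i1 i2 i) (σ i) := by
    apply Fintype.sum_equiv (Equiv.swap i1 i2)
    intro x
    simp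
  have hsub : ∑ i, (c (Equiv.swap i1 i2 i) (σ i) - c i (σ i))
      = ∑ i ∈ ({i1, i2} : Finset α), (c (Equiv.swap i1 i2 i) (σ i) - c i (σ i)) := by
    symm
    apply Finset.sum_subset (Finset.subset_univ _)
    intro i _ hi
    simp only [Finset.mem_insert, Finset.mem_singleton, not_or] at hi
    rw [Equiv.swap_apply_of_ne_of_ne hi.1 hi.2]
    ring
  have hpair : ∑ i ∈ ({i1, i2} : Finset α), (c (Equiv.swap i1 i2 i) (σ i) - c i (σ i))
      = (c i2 (σ i1) - c i1 (σ i1)) + (c i1 (σ i2) - c i2 (σ i2)) := by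
    rw [Finset.sum_pair h]
    simp
  simp only [Equiv.Perm.mul_apply]
  rw [reindex]
  rw [Finset.sum_sub_distrib] at hsub
  linarith [hsub, hpair]

lemma stmt8_exists_perm {α : Type*} [DecidableEq α] {i1 i2 j1 j2 : α}
    (hi : i1 ≠ i2) (hj : j1 ≠ j2) :
    ∃ σ : Equiv.Perm α, σ i1 = j1 ∧ σ i2 = j2 := by
  refine ⟨Equiv.swap (Equiv.swap i1 j1 i2) j2 * Equiv.swap i1 j1, ?_, ?_⟩
  · have hx : j1 ≠ Equiv.swap i1 j1 i2 := by
      intro hcon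
      apply hi
      apply (Equiv.swap i1 j1).injective
      rw [Equiv.swap_apply_left, ← hcon]
    simp only [Equiv.Perm.mul_apply, Equiv.swap_apply_left]
    exact Equiv.swap_apply_of_ne_of_ne hx hj
  · simp only [Equiv.Perm.mul_apply, Equiv.swap_apply_left]

lemma stmt8_mixed (m n : ℕ)
    (q : Fin (m + 2) → Fin (m + 2) → Fin (n + 2) → Fin (n + 2) → ℝ)
    (a : Fin (m + 2) → Fin (m + 2) → ℝ) (b : Fin (n + 2) → Fin (n + 2) → ℝ)
    (H : ∀ (σ : Equiv.Perm (Fin (m + 2))) (π : Equiv.Perm (Fin (n + 2))),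
        (∑ i, ∑ k, q i (σ i) k (π k)) = (∑ i, a i (σ i)) + (∑ k, b k (π k)))
    (i1 i2 j1 j2 : Fin (m + 2)) (k1 k2 l1 l2 : Fin (n + 2)) :
    (q i1 j2 k1 l2 + q i2 j1 k1 l2 - q i1 j1 k1 l2 - q i2 j2 k1 l2)
      + (q i1 j2 k2 l1 + q i2 j1 k2 l1 - q i1 j1 k2 l1 - q i2 j2 k2 l1)
      - (q i1 j2 k1 l1 + q i2 j1 k1 l1 - q i1 j1 k1 l1 - q i2 j2 k1 l1)
      - (q i1 j2 k2 l2 + q i2 j1 k2 l2 - q i1 j1 k2 l2 - q i2 j2 k2 l2) = 0 := by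
  by_cases hi : i1 = i2
  · subst hi; ring
  by_cases hj : j1 = j2
  · subst hj; ring
  by_cases hk : k1 = k2
  · subst hk; ring
  by_cases hl : l1 = l2
  · subst hl; ring
  obtain ⟨σ, hσ1, hσ2⟩ := stmt8_exists_perm hi hj
  obtain ⟨π, hπ1, hπ2⟩ := stmt8_exists_perm hk hl
  have hsplit : ∀ ρ : Equiv.Perm (Fin (n + 2)),
      ∑ k, (q i1 j2 k (ρ k) + q i2 j1 k (ρ k) - q i1 j1 k (ρ k) - q i2 j2 k (ρ k))
        = (∑ k, q i1 j2 k (ρ k)) + (∑ k, q i2 j1 k (ρ k)) - (∑ k, q i1 j1 k (ρ k))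
          - (∑ k, q i2 j2 k (ρ k)) := by
    intro ρ
    rw [Finset.sum_sub_distrib, Finset.sum_sub_distrib, Finset.sum_add_distrib]
  have hA : ∀ ρ : Equiv.Perm (Fin (n + 2)),
      (∑ k, q i1 j2 k (ρ k)) + (∑ k, q i2 j1 k (ρ k)) - (∑ k, q i1 j1 k (ρ k))
        - (∑ k, q i2 j2 k (ρ k))
      = (∑ i, a i ((σ * Equiv.swap i1 i2) i)) - ∑ i, a i (σ i) := by
    intro ρ
    have h1 := H (σ * Equiv.swap i1 i2) ρ
    have h2 := H σ ρ
    have h3 := stmt8_swap_sum (fun i x => ∑ k, q i x k (ρ k)) σ i1 i2 hi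
    simp only [hσ1, hσ2] at h3
    linarith [h1, h2, h3]
  have key := stmt8_swap_sum
      (fun k y => q i1 j2 k y + q i2 j1 k y - q i1 j1 k y - q i2 j2 k y) π k1 k2 hk
  rw [hsplit (π * Equiv.swap k1 k2), hsplit π, hA, hA, hπ1, hπ2] at key
  linarith [key]

theorem stmt_8 (m n : ℕ)
    (q : Fin (m + 2) → Fin (m + 2) → Fin (n + 2) → Fin (n + 2) → ℝ) :
    (∃ (a : Fin (m + 2) → Fin (m + 2) → ℝ) (b : Fin (n + 2) → Fin (n + 2) → ℝ),
      ∀ (σ : Equiv.Perm (Fin (m + 2))) (π : Equiv.Perm (Fin (n + 2))),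
        (∑ i, ∑ k, q i (σ i) k (π k)) = (∑ i, a i (σ i)) + (∑ k, b k (π k)))
    ↔ (∃ (e f : Fin (m + 2) → Fin (m + 2) → Fin (n + 2) → ℝ)
        (g h : Fin (m + 2) → Fin (n + 2) → Fin (n + 2) → ℝ),
        ∀ i j k l, q i j k l = e i j k + f i j l + g i k l + h j k l) := by
  constructor
  · rintro ⟨a, b, H⟩
    refine ⟨fun i j k => q i j k 0,
      fun i j l => q i j 0 l - q i j 0 0,
      fun i k l => q i 0 k l - q i 0 k 0 - q i 0 0 l + q i 0 0 0
        - q 0 0 k l + q 0 0 k 0 + q 0 0 0 l - q 0 0 0 0,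
      fun j k l => q 0 j k l - q 0 j k 0 - q 0 j 0 l + q 0 j 0 0, ?_⟩
    intro i j k l
    have := stmt8_mixed m n q a b H i 0 j 0 k 0 l 0
    dsimp only
    linarith [this]
  · rintro ⟨e, f, g, h, hq⟩
    refine ⟨fun i j => (∑ k, e i j k) + ∑ l, f i j l,
      fun k l => (∑ i, g i k l) + ∑ j, h j k l, ?_⟩
    intro σ π
    have step1 : (∑ i, ∑ k, q i (σ i) k (π k))
        = (∑ i, ∑ k, e i (σ i) k) + (∑ i, ∑ k, f i (σ i) (π k))
          + (∑ i, ∑ k, g i k (π k)) + (∑ i, ∑ k, h (σ i) k (π k)) := by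
      rw [← Finset.sum_add_distrib, ← Finset.sum_add_distrib, ← Finset.sum_add_distrib]
      apply Finset.sum_congr rfl
      intro i _
      rw [← Finset.sum_add_distrib, ← Finset.sum_add_distrib, ← Finset.sum_add_distrib]
      apply Finset.sum_congr rfl
      intro k _
      exact hq i (σ i) k (π k)
    have hf : ∀ i : Fin (m + 2), ∑ k, f i (σ i) (π k) = ∑ l, f i (σ i) l :=
      fun i => Equiv.sum_comp π (f i (σ i))
    have hg : (∑ i, ∑ k, g i k (π k)) = ∑ k, ∑ i, g i k (π k) := Finset.sum_comm
    have hh : (∑ i, ∑ k, h (σ i) k (π k)) = ∑ k, ∑ j, h j k (π k) := by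
      rw [Finset.sum_comm]
      apply Finset.sum_congr rfl
      intro k _
      exact Equiv.sum_comp σ (fun j => h j k (π k))
    rw [step1, hg, hh, Finset.sum_add_distrib, Finset.sum_add_distrib]
    simp only [hf]
    ring
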